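/- For every strictly increasing function g : ℝ → ℝ and every bijection h : ℝ^p → ℝ^p that is Borel measurable with Borel measurable inverse, Λ( g∘Y | h∘X ) = Λ(Y|X). -/

import Mathlib

open MeasureTheory ProbabilityTheory Set Filter Topology

/-- The (nonparametric) relative effect `Ψ(μ, ν) = ∫ μ((-∞,y)) + (1/2) μ({y}) dν(y)`. -/
noncomputable def relEffect (μ ν : Measure ℝ) : ℝ :=
  ∫ y, ((μ (Set.Iio y)).toReal + (1 / 2) * (μ {y}).toReal) ∂ν

/-- `α(μ) = 1 - ∫ μ({x}) dμ(x) = 1 - P(X = X*)`, the non-discrete mass of `μ`. -/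
noncomputable def alphaCoeff {E : Type*} [MeasurableSpace E] (μ : Measure E) : ℝ :=
  1 - ∫ x, (μ {x}).toReal ∂μ

/-- The coefficient of separation `Λ(Y|X)`. -/
noncomputable def sepCoeff {Ω E : Type*} [MeasurableSpace Ω] [MeasurableSpace E]
    (P : Measure Ω) [IsFiniteMeasure P] (Y : Ω → ℝ) (X : Ω → E) : ℝ :=
  (alphaCoeff (P.map X))⁻¹ *
    ∫ x : E × E,
      (relEffect (condDistrib Y X P x.1) (condDistrib Y X P x.2)
        - relEffect (condDistrib Y X P x.2) (condDistrib Y X P x.1)) ^ 2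
      ∂((P.map X).prod (P.map X))

/-- A random variable is non-degenerate if it is not a.s. constant. -/
def Nondegenerate {Ω α : Type*} [MeasurableSpace Ω] (P : Measure Ω) (Z : Ω → α) : Prop :=
  ¬ ∃ c, ∀ᵐ ω ∂P, Z ω = c

lemma relEffect_map (μ ν : Measure ℝ) {g : ℝ → ℝ} (hg : StrictMono g) :
    relEffect (μ.map g) (ν.map g) = relEffect μ ν := by
  have hgm : Measurable g := hg.monotone.measurable
  have hemb : MeasurableEmbedding g := hgm.measurableEmbedding hg.injective
  unfold relEffect
  rw [hemb.integral_map]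
  refine integral_congr_ae (ae_of_all _ fun y => ?_)
  have h1 : g ⁻¹' Set.Iio (g y) = Set.Iio y := by ext z; simp [hg.lt_iff_lt]
  have h2 : g ⁻¹' {g y} = {y} := by ext z; simp [hg.injective.eq_iff]
  simp only [Measure.map_apply hgm measurableSet_Iio,
    Measure.map_apply hgm (measurableSet_singleton _), h1, h2]

lemma alphaCoeff_map {E : Type*} [MeasurableSpace E] [MeasurableSingletonClass E]
    (μ : Measure E) {h : E → E} (hemb : MeasurableEmbedding h) :
    alphaCoeff (μ.map h) = alphaCoeff μ := by
  unfold alphaCoeff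
  rw [hemb.integral_map]
  refine congrArg (1 - ·) (integral_congr_ae (ae_of_all _ fun x => ?_))
  have h2 : h ⁻¹' {h x} = {x} := by ext z; simp [hemb.injective.eq_iff]
  simp only [Measure.map_apply hemb.measurable (measurableSet_singleton _), h2]

/-- Invariance of `Λ` under strictly increasing transformations of the response and
bijective bimeasurable transformations of the predictor vector. -/
theorem sepCoeff_invariance_strictMono_bijective
    {Ω : Type*} [MeasurableSpace Ω] {p : ℕ} (hp : 1 ≤ p)
    (P : Measure Ω) [IsProbabilityMeasure P]
    (X : Ω → (Fin p → ℝ)) (Y : Ω → ℝ)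
    (hX : Measurable X) (hY : Measurable Y)
    (hXnd : ∃ k, Nondegenerate P fun ω => X ω k)
    (hYnd : Nondegenerate P Y)
    (g : ℝ → ℝ) (hg : StrictMono g)
    (h : (Fin p → ℝ) → (Fin p → ℝ)) (hbij : Function.Bijective h)
    (hh : Measurable h) (hhinv : Measurable (Function.invFun h)) :
    sepCoeff P (g ∘ Y) (h ∘ X) = sepCoeff P Y X := by
  have hgm : Measurable g := hg.monotone.measurable
  have hembg : MeasurableEmbedding g := hgm.measurableEmbedding hg.injective
  have hembh : MeasurableEmbedding h := hh.measurableEmbedding hbij.injective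
  set μ := P.map X with hμ
  haveI : IsProbabilityMeasure μ := Measure.isProbabilityMeasure_map hX.aemeasurable
  set κ := condDistrib Y X P with hκ
  set L : Kernel (Fin p → ℝ) ℝ :=
    Kernel.map (Kernel.comap κ (Function.invFun h) hhinv) g with hL
  have hLapp : ∀ x, L (h x) = (κ x).map g := by
    intro x
    rw [hL, Kernel.map_apply _ hgm, Kernel.comap_apply,
      Function.leftInverse_invFun hbij.injective x]
  have hXY : Measurable fun ω => (X ω, Y ω) := hX.prodMk hY
  have hXY' : Measurable fun ω => (h (X ω), g (Y ω)) := (hh.comp hX).prodMk (hgm.comp hY)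
  set ρ' : Measure ((Fin p → ℝ) × ℝ) := P.map (fun ω => (h (X ω), g (Y ω))) with hρ'
  haveI : IsProbabilityMeasure ρ' := Measure.isProbabilityMeasure_map hXY'.aemeasurable
  haveI : IsProbabilityMeasure (P.map fun ω => (X ω, Y ω)) :=
    Measure.isProbabilityMeasure_map hXY.aemeasurable
  have hfst : ρ'.fst = μ.map h := by
    rw [hρ', hμ, Measure.map_map hh hX]
    exact Measure.fst_map_prodMk (hgm.comp hY)
  have hcompρ : μ ⊗ₘ κ = P.map fun ω => (X ω, Y ω) := by
    rw [hκ, condDistrib_def, hμ, ← Measure.fst_map_prodMk (X := X) hY]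
    exact (P.map fun ω => (X ω, Y ω)).disintegrate _
  have hmain : ρ' = ρ'.fst ⊗ₘ L := by
    rw [hfst]
    ext s hs
    rw [Measure.compProd_apply hs, hembh.lintegral_map, hρ', Measure.map_apply hXY' hs]
    have hpre : (fun ω => (h (X ω), g (Y ω))) ⁻¹' s
        = (fun ω => (X ω, Y ω)) ⁻¹' (Prod.map h g ⁻¹' s) := rfl
    rw [hpre, ← Measure.map_apply hXY ((hh.prodMap hgm) hs), ← hcompρ,
      Measure.compProd_apply ((hh.prodMap hgm) hs)]
    refine lintegral_congr fun x => ?_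
    rw [hLapp x, Measure.map_apply hgm (measurable_prodMk_left hs)]
    rfl
  have huniq := eq_condKernel_of_measure_eq_compProd L hmain
  have hcd : condDistrib (g ∘ Y) (h ∘ X) P = ρ'.condKernel := by
    rw [condDistrib_def]; rfl
  rw [hfst] at huniq
  have hae : ∀ᵐ x ∂μ, condDistrib (g ∘ Y) (h ∘ X) P (h x) = (κ x).map g := by
    filter_upwards [ae_of_ae_map hembh.measurable.aemeasurable huniq] with x hx
    rw [hcd, ← hx, hLapp x]
  have haeP : ∀ᵐ z : ((Fin p → ℝ)) × ((Fin p → ℝ)) ∂μ.prod μ,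
      condDistrib (g ∘ Y) (h ∘ X) P (h z.1) = (κ z.1).map g ∧
      condDistrib (g ∘ Y) (h ∘ X) P (h z.2) = (κ z.2).map g := by
    have h1 : ∀ᵐ z : ((Fin p → ℝ)) × ((Fin p → ℝ)) ∂μ.prod μ,
        condDistrib (g ∘ Y) (h ∘ X) P (h z.1) = (κ z.1).map g := by
      refine ae_of_ae_map (f := Prod.fst)
        (p := fun w => condDistrib (g ∘ Y) (h ∘ X) P (h w) = Measure.map g (κ w))
        measurable_fst.aemeasurable ?_
      rw [Measure.map_fst_prod]
      simpa using hae
    have h2 : ∀ᵐ z : ((Fin p → ℝ)) × ((Fin p → ℝ)) ∂μ.prod μ,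
        condDistrib (g ∘ Y) (h ∘ X) P (h z.2) = (κ z.2).map g := by
      refine ae_of_ae_map (f := Prod.snd)
        (p := fun w => condDistrib (g ∘ Y) (h ∘ X) P (h w) = Measure.map g (κ w))
        measurable_snd.aemeasurable ?_
      rw [Measure.map_snd_prod]
      simpa using hae
    exact h1.and h2
  have hmapX : P.map (h ∘ X) = μ.map h := (Measure.map_map hh hX).symm
  unfold sepCoeff
  rw [hmapX, alphaCoeff_map μ hembh]
  congr 1
  rw [Measure.map_prod_map μ μ hh hh]
  have hembhh : MeasurableEmbedding (Prod.map h h) := hembh.prodMap hembh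
  rw [hembhh.integral_map]
  refine integral_congr_ae ?_
  filter_upwards [haeP] with z hz
  simp only [Prod.map_fst, Prod.map_snd]
  rw [hz.1, hz.2, relEffect_map _ _ hg, relEffect_map _ _ hg, hκ]
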